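/- Let z_1,...,z_d ≥ 0 with z_1 + ... + z_d = 1 and let a = Φ(z_1,...,z_d). Then max_{0 ≤ t ≤ 1} Φ(t z_1, ..., t z_d, 1−t) = a + 1, and the maximum is attained at t = a/(a+1). -/

import Mathlib

/-- `Φ(x₁,…,x_d) = (x₁^{x₁} ⋯ x_d^{x_d})⁻¹` (real exponents, with the convention `0⁰ = 1`). -/
noncomputable def PhiF {d : ℕ} (x : Fin d → ℝ) : ℝ := 1 / ∏ i, x i ^ x i

lemma phi_prod_pos {d : ℕ} (z : Fin d → ℝ) (hz : ∀ i, 0 ≤ z i) :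
    (0:ℝ) < ∏ i, z i ^ z i := by
  apply Finset.prod_pos
  intro i _
  rcases eq_or_lt_of_le (hz i) with h | h
  · simp [← h]
  · exact Real.rpow_pos_of_pos h _

lemma phi_formula {d : ℕ} (z : Fin d → ℝ) (hz : ∀ i, 0 ≤ z i) (hsum : ∑ i, z i = 1)
    (t : ℝ) (ht0 : 0 ≤ t) :
    PhiF (Fin.snoc (fun i => t * z i) (1 - t))
      = (PhiF z) ^ t / (t ^ t * (1 - t) ^ (1 - t)) := by
  have hP : (0:ℝ) < ∏ i, z i ^ z i := phi_prod_pos z hz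
  unfold PhiF
  rw [Fin.prod_univ_castSucc]
  simp only [Fin.snoc_castSucc, Fin.snoc_last]
  have h1 : (∏ i : Fin d, (t * z i) ^ (t * z i))
      = t ^ t * (∏ i, z i ^ z i) ^ t := by
    have key : ∀ i : Fin d, (t * z i) ^ (t * z i) = t ^ (t * z i) * (z i ^ z i) ^ t := by
      intro i
      rw [Real.mul_rpow ht0 (hz i)]
      congr 1
      rw [← Real.rpow_mul (hz i), mul_comm]
    simp_rw [key]
    rw [Finset.prod_mul_distrib,
      Real.finset_prod_rpow _ _ (fun i _ => Real.rpow_nonneg (hz i) _),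
      ← Real.rpow_sum_of_nonneg ht0 (fun i _ => mul_nonneg ht0 (hz i)), ← Finset.mul_sum, hsum,
      mul_one]
  have h2 : (1 / ∏ i, z i ^ z i) ^ t = ((∏ i, z i ^ z i) ^ t)⁻¹ := by
    rw [one_div, Real.inv_rpow hP.le]
  rw [h1, h2, one_div, div_eq_mul_inv, ← mul_inv]
  congr 1
  ring

/-- Let `z₁,…,z_d ≥ 0` with `z₁ + ⋯ + z_d = 1` and let `a = Φ(z₁,…,z_d)`. Then the maximum of
`Φ(t z₁, …, t z_d, 1 − t)` over `t ∈ [0,1]` equals `a + 1`, and it is attained at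
`t = a/(a+1)`. -/
theorem phi_extend_max {d : ℕ} (z : Fin d → ℝ) (hz : ∀ i, 0 ≤ z i) (hsum : ∑ i, z i = 1)
    (a : ℝ) (ha : a = PhiF z) :
    (∀ t ∈ Set.Icc (0 : ℝ) 1,
        PhiF (Fin.snoc (fun i => t * z i) (1 - t)) ≤ a + 1) ∧
    PhiF (Fin.snoc (fun i => (a / (a + 1)) * z i) (1 - a / (a + 1))) = a + 1 := by
  have hP : (0:ℝ) < ∏ i, z i ^ z i := phi_prod_pos z hz
  have haP : a = 1 / ∏ i, z i ^ z i := by rw [ha]; rfl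
  have ha0 : 0 < a := by rw [haP]; positivity
  constructor
  · intro t ht
    obtain ⟨ht0, ht1⟩ := ht
    rw [phi_formula z hz hsum t ht0, ← ha]
    rcases eq_or_lt_of_le ht0 with h0 | h0
    · rw [← h0]
      simp [Real.rpow_zero]
      linarith
    rcases eq_or_lt_of_le ht1 with h1 | h1
    · rw [h1]
      simp [Real.rpow_one]
    -- interior case: weighted AM-GM
    have h1t : 0 < 1 - t := by linarith
    have key : (a / t) ^ t * (1 / (1 - t)) ^ (1 - t) ≤ t * (a / t) + (1 - t) * (1 / (1 - t)) :=
      Real.geom_mean_le_arith_mean2_weighted ht0 h1t.le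
        (div_nonneg ha0.le ht0) (by positivity) (by ring)
    have heq : a ^ t / (t ^ t * (1 - t) ^ (1 - t))
        = (a / t) ^ t * (1 / (1 - t)) ^ (1 - t) := by
      rw [Real.div_rpow ha0.le ht0, Real.div_rpow zero_le_one h1t.le, Real.one_rpow]
      field_simp
    have hval : t * (a / t) + (1 - t) * (1 / (1 - t)) = a + 1 := by
      field_simp
    rw [heq, ← hval]
    exact key
  · set t := a / (a + 1) with htdef
    have ha1 : 0 < a + 1 := by linarith
    have ht0 : 0 ≤ t := by positivity
    have h1t : 1 - t = 1 / (a + 1) := by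
      rw [htdef]
      field_simp
      ring
    rw [phi_formula z hz hsum t ht0, ← ha]
    have e1 : a ^ t / (t ^ t * (1 - t) ^ (1 - t))
        = (a / t) ^ t * (1 / (1 - t)) ^ (1 - t) := by
      rw [Real.div_rpow ha0.le ht0, Real.div_rpow zero_le_one (by rw [h1t]; positivity),
        Real.one_rpow]
      field_simp
    have e2 : a / t = a + 1 := by
      rw [htdef]
      field_simp
    have e3 : 1 / (1 - t) = a + 1 := by
      rw [h1t]
      field_simp
    rw [e1, e2, e3, ← Real.rpow_add ha1, add_sub_cancel, Real.rpow_one]
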